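/- For every integer m ≥ 2, the series Σ_{n≥0} φ_{n,m} q^n converges for every real number q with 0 ≤ q ≤ 2/27, and diverges for every real number q > 2/27. -/

import Mathlib

/-- `phi n m` is the number of rooted triangulations without self-loops of a disc with
`m` boundary vertices and `n` internal vertices (as a real number). -/
noncomputable def phi (n m : ℕ) : ℝ :=
  ((2:ℝ) ^ (n + 1) * (Nat.factorial (2 * (m - 2) + 1) : ℝ) *
      (Nat.factorial (2 * (m - 2) + 3 * n) : ℝ)) /
    (((Nat.factorial (m - 2) : ℝ)) ^ 2 * (Nat.factorial n : ℝ) *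
      (Nat.factorial (2 * (m - 2) + 2 * n + 2) : ℝ))

lemma phi_pos (n m : ℕ) : 0 < phi n m := by
  unfold phi
  have h1 := Nat.factorial_pos (2 * (m - 2) + 1)
  have h2 := Nat.factorial_pos (2 * (m - 2) + 3 * n)
  have h3 := Nat.factorial_pos (m - 2)
  have h4 := Nat.factorial_pos n
  have h5 := Nat.factorial_pos (2 * (m - 2) + 2 * n + 2)
  positivity

lemma phi_succ (n m : ℕ) :
    phi (n + 1) m *
        (((n:ℝ) + 1) * (2 * ((m - 2 : ℕ):ℝ) + 2 * n + 3) * (2 * ((m - 2 : ℕ):ℝ) + 2 * n + 4)) =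
      phi n m *
        (2 * (2 * ((m - 2 : ℕ):ℝ) + 3 * n + 1) * (2 * ((m - 2 : ℕ):ℝ) + 3 * n + 2) *
          (2 * ((m - 2 : ℕ):ℝ) + 3 * n + 3)) := by
  set k := m - 2 with hk
  have F1 : ((Nat.factorial (2 * k + 3 * (n + 1)) : ℝ))
      = (2 * (k:ℝ) + 3 * n + 3) * (2 * (k:ℝ) + 3 * n + 2) * (2 * (k:ℝ) + 3 * n + 1)
        * (Nat.factorial (2 * k + 3 * n) : ℝ) := by
    have e : 2 * k + 3 * (n + 1) = ((2 * k + 3 * n) + 1) + 1 + 1 := by ring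
    rw [e, Nat.factorial_succ, Nat.factorial_succ, Nat.factorial_succ]
    push_cast; ring
  have F2 : ((Nat.factorial (2 * k + 2 * (n + 1) + 2) : ℝ))
      = (2 * (k:ℝ) + 2 * n + 4) * (2 * (k:ℝ) + 2 * n + 3)
        * (Nat.factorial (2 * k + 2 * n + 2) : ℝ) := by
    have e : 2 * k + 2 * (n + 1) + 2 = ((2 * k + 2 * n + 2) + 1) + 1 := by ring
    rw [e, Nat.factorial_succ, Nat.factorial_succ]
    push_cast; ring
  have F3 : ((Nat.factorial (n + 1) : ℝ)) = ((n:ℝ) + 1) * (Nat.factorial n : ℝ) := by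
    rw [Nat.factorial_succ]; push_cast; ring
  unfold phi
  rw [F1, F2, F3]
  have f1 : ((Nat.factorial k : ℝ)) ≠ 0 := Nat.cast_ne_zero.2 (Nat.factorial_ne_zero k)
  have f2 : ((Nat.factorial n : ℝ)) ≠ 0 := Nat.cast_ne_zero.2 (Nat.factorial_ne_zero n)
  have f3 : ((Nat.factorial (2 * k + 3 * n) : ℝ)) ≠ 0 :=
    Nat.cast_ne_zero.2 (Nat.factorial_ne_zero _)
  have f4 : ((Nat.factorial (2 * k + 2 * n + 2) : ℝ)) ≠ 0 :=
    Nat.cast_ne_zero.2 (Nat.factorial_ne_zero _)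
  field_simp
  ring


lemma key_ineq (K x : ℝ) (hK : 0 ≤ K) (hx : K ^ 2 + 3 * K + 3 ≤ x) :
    4 * (2 * K + 3 * x + 1) * (2 * K + 3 * x + 2) * (2 * K + 3 * x + 3) * (x + 2) ^ 2 ≤
      27 * (x + 1) ^ 3 * (2 * K + 2 * x + 3) * (2 * K + 2 * x + 4) := by
  obtain ⟨j, hj0, rfl⟩ : ∃ j : ℝ, 0 ≤ j ∧ x = K ^ 2 + 3 * K + 3 + j :=
    ⟨x - (K ^ 2 + 3 * K + 3), by linarith, by ring⟩
  have hm : ∀ i l : ℕ, (0:ℝ) ≤ K ^ i * j ^ l := fun i l =>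
    mul_nonneg (pow_nonneg hK i) (pow_nonneg hj0 l)
  nlinarith [hm 0 1, hm 0 2, hm 0 3, hm 0 4, hm 1 0, hm 1 1, hm 1 2, hm 1 3,
    hm 2 0, hm 2 1, hm 2 2, hm 2 3, hm 3 0, hm 3 1, hm 3 2, hm 4 0, hm 4 1, hm 4 2,
    hm 5 0, hm 5 1, hm 6 0, hm 6 1, hm 7 0, hm 8 0,
    (by ring : 27 * ((K ^ 2 + 3 * K + 3 + j) + 1) ^ 3 * (2 * K + 2 * (K ^ 2 + 3 * K + 3 + j) + 3) *
        (2 * K + 2 * (K ^ 2 + 3 * K + 3 + j) + 4)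
      - 4 * (2 * K + 3 * (K ^ 2 + 3 * K + 3 + j) + 1) * (2 * K + 3 * (K ^ 2 + 3 * K + 3 + j) + 2) *
        (2 * K + 3 * (K ^ 2 + 3 * K + 3 + j) + 3) * ((K ^ 2 + 3 * K + 3 + j) + 2) ^ 2
      = 23520 + 20904 * (K ^ 0 * j ^ 1) + 6900 * (K ^ 0 * j ^ 2) + 1002 * (K ^ 0 * j ^ 3)
        + 54 * (K ^ 0 * j ^ 4) + 55976 * (K ^ 1 * j ^ 0) + 35912 * (K ^ 1 * j ^ 1)
        + 7562 * (K ^ 1 * j ^ 2) + 522 * (K ^ 1 * j ^ 3) + 60252 * (K ^ 2 * j ^ 0)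
        + 28422 * (K ^ 2 * j ^ 1) + 4116 * (K ^ 2 * j ^ 2) + 180 * (K ^ 2 * j ^ 3)
        + 37974 * (K ^ 3 * j ^ 0) + 13202 * (K ^ 3 * j ^ 1) + 1210 * (K ^ 3 * j ^ 2)
        + 15486 * (K ^ 4 * j ^ 0) + 4062 * (K ^ 4 * j ^ 1) + 216 * (K ^ 4 * j ^ 2)
        + 4380 * (K ^ 5 * j ^ 0) + 854 * (K ^ 5 * j ^ 1) + 948 * (K ^ 6 * j ^ 0)
        + 108 * (K ^ 6 * j ^ 1) + 166 * (K ^ 7 * j ^ 0) + 18 * (K ^ 8 * j ^ 0))]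

set_option maxHeartbeats 1000000 in
lemma summable_phi_boundary (m : ℕ) : Summable (fun n : ℕ => phi n m * (2 / 27 : ℝ) ^ n) := by
  set k := m - 2 with hk
  set K : ℝ := (k : ℝ) with hK
  have hK0 : (0:ℝ) ≤ K := Nat.cast_nonneg k
  set b : ℕ → ℝ := fun n => phi n m * (2 / 27 : ℝ) ^ n with hb
  have hbpos : ∀ n, 0 < b n := fun n => mul_pos (phi_pos n m) (by positivity)
  set N : ℕ := k ^ 2 + 3 * k + 3 with hN
  -- one step of decrease
  have hstep : ∀ n, N ≤ n → b (n + 1) * ((n:ℝ) + 2) ^ 2 ≤ b n * ((n:ℝ) + 1) ^ 2 := by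
    intro n hn
    have hx : K ^ 2 + 3 * K + 3 ≤ (n:ℝ) := by
      have h : ((N:ℕ):ℝ) ≤ (n:ℝ) := Nat.cast_le.2 hn
      rw [hN] at h; push_cast at h; linarith
    have hkey := key_ineq K n hK0 hx
    have hD : (0:ℝ) < ((n:ℝ) + 1) * (2 * K + 2 * n + 3) * (2 * K + 2 * n + 4) := by positivity
    rw [← mul_le_mul_iff_left₀ hD]
    have hratio := phi_succ n m
    have e1 : b (n + 1) * ((n:ℝ) + 2) ^ 2 *
          (((n:ℝ) + 1) * (2 * K + 2 * n + 3) * (2 * K + 2 * n + 4))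
        = (phi n m * (2 / 27 : ℝ) ^ n) *
          ((2 / 27) * (2 * (2 * K + 3 * n + 1) * (2 * K + 3 * n + 2) * (2 * K + 3 * n + 3)) *
            ((n:ℝ) + 2) ^ 2) := by
      have : b (n + 1) * ((n:ℝ) + 2) ^ 2 *
            (((n:ℝ) + 1) * (2 * K + 2 * n + 3) * (2 * K + 2 * n + 4))
          = (phi (n + 1) m *
              (((n:ℝ) + 1) * (2 * K + 2 * n + 3) * (2 * K + 2 * n + 4))) *
            ((2 / 27 : ℝ) ^ (n + 1) * ((n:ℝ) + 2) ^ 2) := by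
        simp only [hb]; ring
      rw [this, hratio, pow_succ]; ring
    have e2 : b n * ((n:ℝ) + 1) ^ 2 *
          (((n:ℝ) + 1) * (2 * K + 2 * n + 3) * (2 * K + 2 * n + 4))
        = (phi n m * (2 / 27 : ℝ) ^ n) *
          (((n:ℝ) + 1) ^ 3 * (2 * K + 2 * n + 3) * (2 * K + 2 * n + 4)) := by
      simp only [hb]; ring
    rw [e1, e2]
    have hpos : (0:ℝ) ≤ phi n m * (2 / 27 : ℝ) ^ n := le_of_lt (hbpos n)
    apply mul_le_mul_of_nonneg_left _ hpos
    nlinarith [hkey]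
  -- monotone consequence
  have hmono : ∀ i : ℕ, b (N + i) * (((N + i : ℕ):ℝ) + 1) ^ 2 ≤ b N * ((N:ℝ) + 1) ^ 2 := by
    intro i
    induction i with
    | zero => simp
    | succ i ih =>
      have h1 := hstep (N + i) (Nat.le_add_right N i)
      have e : ((N + i + 1 : ℕ):ℝ) + 1 = ((N + i : ℕ):ℝ) + 2 := by push_cast; ring
      show b (N + i + 1) * (((N + i + 1 : ℕ):ℝ) + 1) ^ 2 ≤ _
      rw [e]
      exact le_trans h1 ih
  set C : ℝ := b N * ((N:ℝ) + 1) ^ 2 with hC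
  have hsum2 : Summable (fun i : ℕ => 1 / ((i:ℝ) + 1) ^ 2) := by
    have h := Real.summable_one_div_nat_pow.2 (by norm_num : 1 < 2)
    have h2 := (summable_nat_add_iff 1).2 h
    simpa using h2
  rw [← summable_nat_add_iff N]
  refine Summable.of_nonneg_of_le (fun i => (hbpos (i + N)).le) (fun i => ?_)
    (hsum2.mul_left C)
  have h1 : b (i + N) * (((i:ℝ) + 1)) ^ 2 ≤ C := by
    have h2 := hmono i
    rw [Nat.add_comm N i] at h2
    refine le_trans ?_ h2
    apply mul_le_mul_of_nonneg_left _ (hbpos (i + N)).le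
    have : ((i:ℝ) + 1) ≤ ((i + N : ℕ):ℝ) + 1 := by push_cast; nlinarith [(Nat.cast_nonneg k : (0:ℝ) ≤ k), sq_nonneg ((k:ℝ))]
    nlinarith [(Nat.cast_nonneg i : (0:ℝ) ≤ i)]
  rw [mul_one_div, le_div_iff₀ (by positivity)]
  exact h1

open Filter Topology

lemma not_summable_phi (m : ℕ) (q : ℝ) (hq : 2 / 27 < q) :
    ¬ Summable (fun n : ℕ => phi n m * q ^ n) := by
  set K : ℝ := ((m - 2 : ℕ) : ℝ) with hK
  have hq0 : (0:ℝ) < q := lt_trans (by norm_num) hq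
  set r : ℝ := (1 + 27 * q / 2) / 2 with hr
  have hr1 : 1 < r := by rw [hr]; linarith
  have hrq : r < 27 * q / 2 := by rw [hr]; linarith
  -- the ratio function
  set g : ℕ → ℝ := fun n =>
    q * (2 * (2 * K + 3 * n + 1) * (2 * K + 3 * n + 2) * (2 * K + 3 * n + 3)) /
      (((n:ℝ) + 1) * (2 * K + 2 * n + 3) * (2 * K + 2 * n + 4)) with hg
  -- limit of g
  have hgt : Tendsto g atTop (𝓝 (27 * q / 2)) := by
    have hdiv : ∀ c : ℝ, Tendsto (fun n : ℕ => c / (n:ℝ)) atTop (𝓝 0) :=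
      tendsto_const_div_atTop_nhds_zero_nat
    have h3 : ∀ c : ℝ, Tendsto (fun n : ℕ => c / (n:ℝ) + 3) atTop (𝓝 3) := by
      intro c; simpa using (hdiv c).add tendsto_const_nhds
    have h2 : ∀ c : ℝ, Tendsto (fun n : ℕ => c / (n:ℝ) + 2) atTop (𝓝 2) := by
      intro c; simpa using (hdiv c).add tendsto_const_nhds
    have h1 : Tendsto (fun n : ℕ => 1 + 1 / (n:ℝ)) atTop (𝓝 1) := by
      simpa using tendsto_const_nhds.add (hdiv 1)
    have hnum : Tendsto (fun n : ℕ =>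
        (q * 2) * ((2 * K + 1) / (n:ℝ) + 3) * ((2 * K + 2) / (n:ℝ) + 3) *
          ((2 * K + 3) / (n:ℝ) + 3)) atTop (𝓝 ((q * 2) * 3 * 3 * 3)) :=
      ((tendsto_const_nhds.mul (h3 _)).mul (h3 _)).mul (h3 _)
    have hden : Tendsto (fun n : ℕ =>
        (1 + 1 / (n:ℝ)) * ((2 * K + 3) / (n:ℝ) + 2) * ((2 * K + 4) / (n:ℝ) + 2))
        atTop (𝓝 (1 * 2 * 2)) := (h1.mul (h2 _)).mul (h2 _)
    have hlim : Tendsto (fun n : ℕ =>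
        ((q * 2) * ((2 * K + 1) / (n:ℝ) + 3) * ((2 * K + 2) / (n:ℝ) + 3) *
          ((2 * K + 3) / (n:ℝ) + 3)) /
        ((1 + 1 / (n:ℝ)) * ((2 * K + 3) / (n:ℝ) + 2) * ((2 * K + 4) / (n:ℝ) + 2)))
        atTop (𝓝 ((q * 2) * 3 * 3 * 3 / (1 * 2 * 2))) := hnum.div hden (by norm_num)
    have heq : (27 * q / 2) = (q * 2) * 3 * 3 * 3 / (1 * 2 * 2) := by ring
    rw [heq]
    apply hlim.congr'
    filter_upwards [eventually_ge_atTop 1] with n hn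
    have hn0 : ((n:ℝ)) ≠ 0 := by
      have : (0:ℝ) < (n:ℝ) := by exact_mod_cast Nat.pos_of_ne_zero (by omega)
      exact ne_of_gt this
    rw [hg]
    field_simp
    ring
  have hev : ∀ᶠ n in atTop, r ≤ g n := hgt.eventually (eventually_ge_nhds hrq)
  apply not_summable_of_ratio_norm_eventually_ge hr1
  · apply Frequently.of_forall
    intro n
    have := mul_pos (phi_pos n m) (pow_pos hq0 n)
    simp only [Real.norm_eq_abs, ne_eq, abs_eq_zero]
    exact ne_of_gt this
  · filter_upwards [hev] with n hrn
    have hfn : (0:ℝ) < phi n m * q ^ n := mul_pos (phi_pos n m) (pow_pos hq0 n)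
    have hfn1 : (0:ℝ) < phi (n + 1) m * q ^ (n + 1) := mul_pos (phi_pos _ m) (pow_pos hq0 _)
    rw [Real.norm_of_nonneg hfn.le, Real.norm_of_nonneg hfn1.le]
    have hD : (0:ℝ) < ((n:ℝ) + 1) * (2 * K + 2 * n + 3) * (2 * K + 2 * n + 4) := by
      have : (0:ℝ) ≤ K := Nat.cast_nonneg _
      positivity
    have hratio := phi_succ n m
    -- f (n+1) = f n * g n
    have hfe : phi (n + 1) m * q ^ (n + 1) = (phi n m * q ^ n) * g n := by
      show phi (n + 1) m * q ^ (n + 1) = (phi n m * q ^ n) *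
        (q * (2 * (2 * K + 3 * n + 1) * (2 * K + 3 * n + 2) * (2 * K + 3 * n + 3)) /
          (((n:ℝ) + 1) * (2 * K + 2 * n + 3) * (2 * K + 2 * n + 4)))
      rw [← mul_div_assoc, eq_div_iff (ne_of_gt hD), pow_succ]
      rw [← hK] at hratio
      linear_combination (q ^ n * q) * hratio
    rw [hfe]
    have := mul_le_mul_of_nonneg_left hrn hfn.le
    calc r * (phi n m * q ^ n) = (phi n m * q ^ n) * r := by ring
    _ ≤ (phi n m * q ^ n) * g n := this


theorem partition_function_radius_of_convergence (m : ℕ) (hm : 2 ≤ m) :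
    (∀ q : ℝ, 0 ≤ q → q ≤ 2 / 27 → Summable (fun n : ℕ => phi n m * q ^ n)) ∧
      (∀ q : ℝ, 2 / 27 < q → ¬ Summable (fun n : ℕ => phi n m * q ^ n)) := by
  constructor
  · intro q hq0 hq
    refine Summable.of_nonneg_of_le (fun n => ?_) (fun n => ?_) (summable_phi_boundary m)
    · exact mul_nonneg (phi_pos n m).le (pow_nonneg hq0 n)
    · exact mul_le_mul_of_nonneg_left (pow_le_pow_left₀ hq0 hq n) (phi_pos n m).le
  · intro q hq
    exact not_summable_phi m q hq
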